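/- For every natural number r and every real x with |x| < 1, Σ_{n=1}^∞ C(n+r,n) ζ(n+1) x^n = Σ_{m=1}^r C(r,m) ζ(m+1, 1−x) x^m − ψ(1−x) − γ (an empty sum being 0), where the series on the left converges absolutely. -/

import Mathlib

open Finset Real

/-- The Riemann zeta function `ζ(s) = Σ_{m=1}^∞ m^{-s}` (for real `s > 1`). -/
noncomputable def realZeta (s : ℝ) : ℝ := ∑' m : ℕ, 1 / ((m : ℝ) + 1) ^ s

/-- The Hurwitz zeta function `ζ(s,a) = Σ_{k=0}^∞ (k+a)^{-s}` (for real `a > 0`, `s > 1`). -/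
noncomputable def hurwitzZetaReal (s a : ℝ) : ℝ := ∑' k : ℕ, 1 / ((k : ℝ) + a) ^ s

/-- The digamma function `ψ = Γ'/Γ`. -/
noncomputable def digammaReal (y : ℝ) : ℝ := deriv Real.Gamma y / Real.Gamma y

local notation "γ" => Real.eulerMascheroniConstant

open Filter Topology in
lemma aux_summable_inv_pow {a : ℝ} (ha : 0 < a) {p : ℕ} (hp : 2 ≤ p) :
    Summable (fun k : ℕ => 1 / ((k : ℝ) + a) ^ p) := by
  rw [← summable_nat_add_iff 1]
  have hbase : Summable (fun k : ℕ => 1 / ((k : ℝ) + 1) ^ 2) := by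
    have := (summable_nat_add_iff (f := fun n : ℕ => 1 / (n : ℝ) ^ 2) 1).2
      ((summable_one_div_nat_pow).2 one_lt_two)
    simpa using this
  apply Summable.of_nonneg_of_le (fun k => by positivity) (fun k => ?_) hbase
  have h1 : (1 : ℝ) ≤ ((k : ℕ) : ℝ) + 1 + a := by linarith [Nat.cast_nonneg (α := ℝ) k]
  have h2 : (((k : ℕ) : ℝ) + 1) ≤ (((k : ℕ) : ℝ) + 1 + a) := by linarith
  have hord : (((k : ℕ) + 1 : ℕ) : ℝ) + a = ((k : ℕ) : ℝ) + 1 + a := by push_cast; ring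
  rw [hord]
  apply one_div_le_one_div_of_le (by positivity)
  calc (((k:ℕ) : ℝ) + 1) ^ 2 ≤ (((k:ℕ) : ℝ) + 1 + a) ^ 2 := by
        apply pow_le_pow_left₀ (by positivity) h2
    _ ≤ (((k:ℕ) : ℝ) + 1 + a) ^ p := pow_le_pow_right₀ h1 hp

lemma zeta_fiber (n : ℕ) :
    HasSum (fun k : ℕ => 1 / ((k : ℝ) + 1) ^ (n + 2)) (realZeta ((n : ℝ) + 1 + 1)) := by
  have hs : Summable (fun k : ℕ => 1 / ((k : ℝ) + 1) ^ (n + 2)) :=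
    aux_summable_inv_pow one_pos (by omega)
  have he : realZeta ((n : ℝ) + 1 + 1) = ∑' k : ℕ, 1 / ((k : ℝ) + 1) ^ (n + 2) := by
    rw [realZeta]
    apply tsum_congr
    intro m
    rw [show ((n : ℝ) + 1 + 1) = ((n + 2 : ℕ) : ℝ) by push_cast; ring, Real.rpow_natCast]
  rw [he]
  exact hs.hasSum

lemma hurwitz_fiber (m : ℕ) (hm : 1 ≤ m) {x : ℝ} (hx : |x| < 1) :
    HasSum (fun k : ℕ => 1 / (((k : ℝ) + 1) - x) ^ (m + 1))
      (hurwitzZetaReal ((m : ℝ) + 1) (1 - x)) := by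
  have hx1 : 0 < 1 - x := by have := abs_lt.1 hx; linarith [this.2]
  have hs : Summable (fun k : ℕ => 1 / ((k : ℝ) + (1 - x)) ^ (m + 1)) :=
    aux_summable_inv_pow hx1 (by omega)
  have he : hurwitzZetaReal ((m : ℝ) + 1) (1 - x) =
      ∑' k : ℕ, 1 / ((k : ℝ) + (1 - x)) ^ (m + 1) := by
    rw [hurwitzZetaReal]
    apply tsum_congr
    intro k
    rw [show ((m : ℝ) + 1) = ((m + 1 : ℕ) : ℝ) by push_cast; ring, Real.rpow_natCast]
  rw [he]
  have hfun : (fun k : ℕ => 1 / ((k : ℝ) + (1 - x)) ^ (m + 1)) =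
      (fun k : ℕ => 1 / (((k : ℝ) + 1) - x) ^ (m + 1)) := by
    funext k
    rw [show (k : ℝ) + (1 - x) = ((k : ℝ) + 1) - x from by ring]
  rw [← hfun]
  exact hs.hasSum

lemma binom_fiber (r : ℕ) {x : ℝ} (hx : |x| < 1) (k : ℕ) :
    HasSum (fun n : ℕ => (Nat.choose (n + 1 + r) (n + 1) : ℝ) * x ^ (n + 1) / ((k : ℝ) + 1) ^ (n + 2))
      (((k : ℝ) + 1) ^ r / (((k : ℝ) + 1) - x) ^ (r + 1) - 1 / ((k : ℝ) + 1)) := by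
  set c : ℝ := (k : ℝ) + 1 with hc
  have hc0 : (0 : ℝ) < c := by positivity
  have hc1 : (1 : ℝ) ≤ c := by simp [hc]
  have ht : ‖x / c‖ < 1 := by
    rw [Real.norm_eq_abs, abs_div, abs_of_pos hc0]
    rw [div_lt_one hc0]
    exact lt_of_lt_of_le hx hc1
  have hcx : c - x ≠ 0 := by
    have h' := abs_lt.1 (lt_of_lt_of_le hx hc1)
    intro h; linarith [h'.2]
  have h1 : HasSum (fun n : ℕ => ((n + r).choose r : ℝ) * (x / c) ^ n)
      (1 / (1 - x / c) ^ (r + 1)) := hasSum_choose_mul_geometric_of_norm_lt_one r ht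
  have h2 : HasSum (fun n : ℕ => ((n + r).choose r : ℝ) * (x / c) ^ n / c)
      (1 / (1 - x / c) ^ (r + 1) / c) := h1.div_const c
  have hval : 1 / (1 - x / c) ^ (r + 1) / c = c ^ r / (c - x) ^ (r + 1) := by
    have e : 1 - x / c = (c - x) / c := by field_simp
    rw [e, div_pow, one_div_div, div_div, pow_succ]
    rw [mul_div_mul_right _ _ hc0.ne']
  rw [hval] at h2
  have h3 := (hasSum_nat_add_iff' 1).2 h2
  simp only [Finset.range_one, Finset.sum_singleton, Nat.cast_zero] at h3
  convert h3 using 2 with n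
  · rfl
  · have hch : (n + 1 + r).choose (n + 1) = (n + 1 + r).choose r := by
      rw [← Nat.choose_symm (Nat.le_add_left r (n + 1))]
      congr 1
      omega
    rw [hch, div_pow, mul_div_assoc, mul_div_assoc, div_div, ← pow_succ]
  · simp

lemma digamma_hasSum {y : ℝ} (h0 : 0 < y) (h2 : y < 2) :
    HasSum (fun k : ℕ => 1 / ((k : ℝ) + 1) - 1 / ((k : ℝ) + y)) (digammaReal y + γ) := by
  set f : ℝ → ℝ := Real.log ∘ Real.Gamma with hf
  have hder : ∀ {x : ℝ}, 0 < x → DifferentiableAt ℝ f x := by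
    intro x hx
    refine (Real.differentiableAt_Gamma ?_).log (Real.Gamma_ne_zero ?_) <;>
      exact fun m => ne_of_gt (lt_of_le_of_lt (neg_nonpos.2 m.cast_nonneg) hx)
  have hlog : ∀ {x : ℝ}, 0 < x → deriv f x = deriv Real.Gamma x / Real.Gamma x := by
    intro x hx
    rw [hf, Function.comp_def,
      deriv.log (Real.differentiableAt_Gamma
        (fun m => ne_of_gt (lt_of_le_of_lt (neg_nonpos.2 m.cast_nonneg) hx)))
        (Real.Gamma_pos_of_pos hx).ne']
  have h_rec : ∀ x : ℝ, 0 < x → f (x + 1) = f x + Real.log x := by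
    intro x hx
    simp only [f, Function.comp_apply, Real.Gamma_add_one hx.ne',
      Real.log_mul hx.ne' (Real.Gamma_pos_of_pos hx).ne', add_comm]
  have hder_rec : ∀ {x : ℝ}, 0 < x → deriv f (x + 1) = deriv f x + 1 / x := by
    intro x hx
    rw [← deriv_comp_add_const, one_div, ← Real.deriv_log,
      ← deriv_add (hder hx) (Real.differentiableAt_log hx.ne')]
    apply Filter.EventuallyEq.deriv_eq
    filter_upwards [eventually_gt_nhds hx] using h_rec
  have hder_nat : ∀ N : ℕ, deriv f ((N : ℝ) + 1) = -γ + (harmonic N : ℝ) := by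
    intro N
    rw [hlog (by positivity), Real.deriv_Gamma_nat N, Real.Gamma_nat_eq_factorial,
      mul_div_assoc]
    have hfac : (N.factorial : ℝ) ≠ 0 := by exact_mod_cast (Nat.factorial_pos N).ne'
    field_simp
  have htel : ∀ N : ℕ, deriv f (y + N) = deriv f y + ∑ k ∈ Finset.range N, 1 / (y + k) := by
    intro N
    induction N with
    | zero => simp
    | succ N ih =>
      have : y + (N + 1 : ℕ) = (y + N) + 1 := by push_cast; ring
      rw [this, hder_rec (by positivity), ih, Finset.sum_range_succ]
      ring
  have hmono : MonotoneOn (deriv f) (Set.Ioi 0) :=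
    Real.convexOn_log_Gamma.monotoneOn_deriv (fun x hx => hder hx)
  -- the error term d N
  set d : ℕ → ℝ := fun N => deriv f ((N : ℝ) + 1) - deriv f (y + N) with hd
  have hd0 : Filter.Tendsto d Filter.atTop (nhds 0) := by
    have hub : ∀ N : ℕ, 1 ≤ N → d N ≤ 1 / (N : ℝ) := by
      intro N hN
      have hN0 : (0 : ℝ) < N := by exact_mod_cast hN
      have h1 : deriv f ((N : ℝ)) ≤ deriv f (y + N) := by
        apply hmono (Set.mem_Ioi.2 hN0) (Set.mem_Ioi.2 (by positivity)) (by linarith)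
      have h2 : deriv f ((N : ℝ) + 1) = deriv f (N : ℝ) + 1 / N := hder_rec hN0
      simp only [hd]
      linarith
    have hlb : ∀ N : ℕ, -(1 / ((N : ℝ) + 1)) ≤ d N := by
      intro N
      have hN0 : (0 : ℝ) ≤ N := N.cast_nonneg
      have h1 : deriv f (y + N) ≤ deriv f ((N : ℝ) + 2) := by
        apply hmono (Set.mem_Ioi.2 (by positivity)) (Set.mem_Ioi.2 (by positivity))
          (by linarith)
      have h2 : deriv f ((N : ℝ) + 2) = deriv f ((N : ℝ) + 1) + 1 / ((N : ℝ) + 1) := by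
        have := hder_rec (x := (N : ℝ) + 1) (by positivity)
        rw [show (N : ℝ) + 1 + 1 = (N : ℝ) + 2 by ring] at this
        exact this
      simp only [hd]
      linarith
    apply tendsto_of_tendsto_of_tendsto_of_le_of_le'
      (g := fun N : ℕ => -(1 / ((N : ℝ) + 1))) (h := fun N : ℕ => 1 / (N : ℝ))
    · have h' : Filter.Tendsto (fun N : ℕ => 1 / ((N : ℝ) + 1)) Filter.atTop (nhds 0) :=
        tendsto_one_div_add_atTop_nhds_zero_nat
      simpa using h'.neg
    · exact tendsto_one_div_atTop_nhds_zero_nat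
    · filter_upwards with N using hlb N
    · filter_upwards [Filter.eventually_ge_atTop 1] with N hN using hub N hN
  -- partial sums converge to deriv f y + γ
  have hpartial : ∀ N : ℕ,
      ∑ k ∈ Finset.range N, (1 / ((k : ℝ) + 1) - 1 / ((k : ℝ) + y)) =
        deriv f y + γ + d N := by
    intro N
    have hharm : (harmonic N : ℝ) = ∑ k ∈ Finset.range N, 1 / ((k : ℝ) + 1) := by
      rw [harmonic]
      push_cast
      simp [one_div]
    have hsplit : ∑ k ∈ Finset.range N, (1 / ((k : ℝ) + 1) - 1 / ((k : ℝ) + y)) =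
        (harmonic N : ℝ) - ∑ k ∈ Finset.range N, 1 / (y + k) := by
      rw [Finset.sum_sub_distrib, hharm]
      congr 1
      exact Finset.sum_congr rfl (fun k _ => by rw [add_comm])
    rw [hsplit]
    simp only [hd, hder_nat N, htel N]
    ring
  have htends : Filter.Tendsto
      (fun N : ℕ => ∑ k ∈ Finset.range N, (1 / ((k : ℝ) + 1) - 1 / ((k : ℝ) + y)))
      Filter.atTop (nhds (deriv f y + γ)) := by
    have h' : Filter.Tendsto (fun N : ℕ => deriv f y + γ + d N) Filter.atTop
        (nhds (deriv f y + γ + 0)) := tendsto_const_nhds.add hd0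
    rw [add_zero] at h'
    simp only [hpartial]
    exact h'
  -- summability
  have hsm : Summable (fun k : ℕ => 1 / ((k : ℝ) + 1) - 1 / ((k : ℝ) + y)) := by
    have hbase : Summable (fun k : ℕ => 1 / ((k : ℝ) + 1) ^ 2) := by
      have := (summable_nat_add_iff (f := fun n : ℕ => 1 / (n : ℝ) ^ 2) 1).2
        ((summable_one_div_nat_pow).2 one_lt_two)
      simpa using this
    apply Summable.of_norm
    apply Summable.of_nonneg_of_le (fun k => norm_nonneg _)
      (fun k => ?_) (hbase.mul_left (2 / y))
    have hk1 : (0 : ℝ) < (k : ℝ) + 1 := by positivity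
    have hky : (0 : ℝ) < (k : ℝ) + y := by positivity
    have heq : 1 / ((k : ℝ) + 1) - 1 / ((k : ℝ) + y) =
        (y - 1) / (((k : ℝ) + 1) * ((k : ℝ) + y)) := by
      field_simp
      ring
    rw [Real.norm_eq_abs, heq, abs_div, abs_of_pos (mul_pos hk1 hky)]
    have hya : |y - 1| ≤ 1 := by rw [abs_le]; constructor <;> linarith
    have hdenom : y / 2 * (((k : ℝ) + 1) * ((k : ℝ) + 1)) ≤ ((k : ℝ) + 1) * ((k : ℝ) + y) := by
      nlinarith [Nat.cast_nonneg (α := ℝ) k,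
        mul_nonneg (le_of_lt (sub_pos.2 h2)) (mul_self_nonneg ((k : ℝ)))]
    calc |y - 1| / (((k : ℝ) + 1) * ((k : ℝ) + y)) ≤ 1 / (y / 2 * (((k : ℝ) + 1) * ((k : ℝ) + 1))) := by
          exact div_le_div₀ (by norm_num) hya
            (mul_pos (by linarith) (mul_pos hk1 hk1)) hdenom
      _ = 2 / y * (1 / ((k : ℝ) + 1) ^ 2) := by
          rw [pow_two]
          field_simp
  have hhs := hsm.hasSum
  have := hhs.tendsto_sum_nat
  have heq := tendsto_nhds_unique this htends
  rw [heq] at hhs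
  rwa [digammaReal, ← hlog h0]

/-- For every natural `r` and real `|x| < 1`,
`Σ_{n=1}^∞ C(n+r,n) ζ(n+1) x^n = Σ_{m=1}^r C(r,m) ζ(m+1, 1−x) x^m − ψ(1−x) − γ`
(an empty sum being `0`), with the series on the left converging absolutely. -/
theorem series_zeta_values_digamma (r : ℕ) (x : ℝ) (hx : |x| < 1) :
    (Summable fun n : ℕ =>
      |(Nat.choose (n + 1 + r) (n + 1) : ℝ) * realZeta ((n : ℝ) + 1 + 1) * x ^ (n + 1)|) ∧
    HasSum (fun n : ℕ =>
      (Nat.choose (n + 1 + r) (n + 1) : ℝ) * realZeta ((n : ℝ) + 1 + 1) * x ^ (n + 1))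
      ((∑ m ∈ Finset.Icc 1 r,
        (Nat.choose r m : ℝ) * hurwitzZetaReal ((m : ℝ) + 1) (1 - x) * x ^ m) -
        digammaReal (1 - x) - Real.eulerMascheroniConstant) := by
  have hx1 : 0 < 1 - x := by have := abs_lt.1 hx; linarith [(abs_lt.1 hx).2]
  have hx2 : 1 - x < 2 := by linarith [(abs_lt.1 hx).1]
  set F : ℕ × ℕ → ℝ := fun p =>
    (Nat.choose (p.1 + 1 + r) (p.1 + 1) : ℝ) * x ^ (p.1 + 1) / ((p.2 : ℝ) + 1) ^ (p.1 + 2)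
    with hF
  set A : ℕ → ℝ := fun n =>
    (Nat.choose (n + 1 + r) (n + 1) : ℝ) * realZeta ((n : ℝ) + 1 + 1) * x ^ (n + 1) with hA
  -- fibers over n
  have h_fiber : ∀ n : ℕ, HasSum (fun k => F (n, k)) (A n) := by
    intro n
    have h := (zeta_fiber n).mul_left
      ((Nat.choose (n + 1 + r) (n + 1) : ℝ) * x ^ (n + 1))
    convert h using 1
    · rfl
    · funext k
      simp only [hF]
      ring
    · simp only [hA]
      ring
  -- abs fibers over n
  have h_fiber_abs : ∀ n : ℕ, HasSum (fun k => |F (n, k)|)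
      ((Nat.choose (n + 1 + r) (n + 1) : ℝ) * |x| ^ (n + 1) * realZeta ((n : ℝ) + 1 + 1)) := by
    intro n
    have h := (zeta_fiber n).mul_left
      ((Nat.choose (n + 1 + r) (n + 1) : ℝ) * |x| ^ (n + 1))
    convert h using 1
    · rfl
    · funext k
      simp only [hF, abs_div, abs_mul, abs_pow, Nat.abs_cast]
      rw [abs_of_pos (show (0 : ℝ) < (k : ℝ) + 1 by positivity)]
      ring
  have hZnonneg : ∀ n : ℕ, 0 ≤ realZeta ((n : ℝ) + 1 + 1) := by
    intro n
    exact (zeta_fiber n).nonneg (fun k => by positivity)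
  -- zeta bound
  obtain ⟨Z2, hZ2sum⟩ : ∃ z, HasSum (fun k : ℕ => 1 / ((k : ℝ) + 1) ^ (0 + 2)) z :=
    ⟨_, zeta_fiber 0⟩
  have hZbound : ∀ n : ℕ, realZeta ((n : ℝ) + 1 + 1) ≤ Z2 := by
    intro n
    refine hasSum_le (fun k => ?_) (zeta_fiber n) hZ2sum
    have h1 : (1 : ℝ) ≤ (k : ℝ) + 1 := by
      have := Nat.cast_nonneg (α := ℝ) k; linarith
    apply one_div_le_one_div_of_le (by positivity)
    exact pow_le_pow_right₀ h1 (by omega)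
  -- bound series: binomial series at |x| with k = 0
  have hbb := (binom_fiber r (x := |x|) (by rwa [abs_abs]) 0).summable
  have hbound : Summable (fun n : ℕ =>
      (Nat.choose (n + 1 + r) (n + 1) : ℝ) * |x| ^ (n + 1) * Z2) := by
    apply Summable.mul_right
    apply hbb.congr
    intro n
    simp
  -- absolute summability on the product
  have habs : Summable (fun p : ℕ × ℕ => |F p|) := by
    rw [summable_prod_of_nonneg (fun p => abs_nonneg _)]
    constructor
    · intro n; exact (h_fiber_abs n).summable
    · apply Summable.of_nonneg_of_le (fun n => tsum_nonneg (fun k => abs_nonneg _))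
        (fun n => ?_) hbound
      rw [(h_fiber_abs n).tsum_eq]
      have hc : (0 : ℝ) ≤ (Nat.choose (n + 1 + r) (n + 1) : ℝ) * |x| ^ (n + 1) := by positivity
      calc (Nat.choose (n + 1 + r) (n + 1) : ℝ) * |x| ^ (n + 1) * realZeta ((n : ℝ) + 1 + 1)
          ≤ (Nat.choose (n + 1 + r) (n + 1) : ℝ) * |x| ^ (n + 1) * Z2 :=
            mul_le_mul_of_nonneg_left (hZbound n) hc
        _ = _ := rfl
  have hFsum : Summable F := summable_abs_iff.1 habs
  -- sum over n-fibers
  have hAsum : HasSum A (∑' p, F p) := hFsum.hasSum.prod_fiberwise h_fiber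
  -- sum over k-fibers
  set g : ℕ → ℝ := fun k =>
    ((k : ℝ) + 1) ^ r / (((k : ℝ) + 1) - x) ^ (r + 1) - 1 / ((k : ℝ) + 1) with hg
  have hswap : HasSum (fun p : ℕ × ℕ => F p.swap) (∑' p, F p) := by
    have hs : Summable (fun p : ℕ × ℕ => F p.swap) := hFsum.prod_symm
    have he : ∑' p : ℕ × ℕ, F p.swap = ∑' p, F p := (Equiv.prodComm ℕ ℕ).tsum_eq F
    rw [← he]
    exact hs.hasSum
  have hgsum : HasSum g (∑' p, F p) :=
    hswap.prod_fiberwise (fun k => binom_fiber r hx k)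
  -- the RHS decomposition
  have hHsum : HasSum (fun k : ℕ => ∑ m ∈ Finset.Icc 1 r,
      (Nat.choose r m : ℝ) * x ^ m * (1 / (((k : ℝ) + 1) - x) ^ (m + 1)))
      (∑ m ∈ Finset.Icc 1 r,
        (Nat.choose r m : ℝ) * hurwitzZetaReal ((m : ℝ) + 1) (1 - x) * x ^ m) := by
    apply hasSum_sum
    intro m hm
    rw [Finset.mem_Icc] at hm
    have h := (hurwitz_fiber m hm.1 hx).mul_left ((Nat.choose r m : ℝ) * x ^ m)
    convert h using 1
    · rfl
    ring
  have hDsum : HasSum (fun k : ℕ => 1 / (((k : ℝ) + 1) - x) - 1 / ((k : ℝ) + 1))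
      (-digammaReal (1 - x) - Real.eulerMascheroniConstant) := by
    have h := (digamma_hasSum hx1 hx2).neg
    convert h using 1
    · rfl
    · funext k
      rw [show (k : ℝ) + (1 - x) = ((k : ℝ) + 1) - x by ring]
      ring
    · ring
  have hcomb := hHsum.add hDsum
  -- pointwise identity
  have hpt : ∀ k : ℕ, (∑ m ∈ Finset.Icc 1 r,
      (Nat.choose r m : ℝ) * x ^ m * (1 / (((k : ℝ) + 1) - x) ^ (m + 1))) +
      (1 / (((k : ℝ) + 1) - x) - 1 / ((k : ℝ) + 1)) = g k := by
    intro k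
    have hc1 : (1 : ℝ) ≤ (k : ℝ) + 1 := by
      have := Nat.cast_nonneg (α := ℝ) k; linarith
    have hcx : (0 : ℝ) < ((k : ℝ) + 1) - x := by
      have := abs_lt.1 (lt_of_lt_of_le hx hc1); linarith [(abs_lt.1 (lt_of_lt_of_le hx hc1)).2]
    set c : ℝ := (k : ℝ) + 1
    have key : (∑ m ∈ Finset.Icc 1 r,
        (Nat.choose r m : ℝ) * x ^ m * (1 / (c - x) ^ (m + 1))) + 1 / (c - x) =
        c ^ r / (c - x) ^ (r + 1) := by
      have hins : Finset.range (r + 1) = insert 0 (Finset.Icc 1 r) := by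
        ext m
        simp only [Finset.mem_range, Finset.mem_insert, Finset.mem_Icc]
        omega
      have hfull : (∑ m ∈ Finset.range (r + 1),
          (Nat.choose r m : ℝ) * x ^ m * (1 / (c - x) ^ (m + 1))) =
          (∑ m ∈ Finset.Icc 1 r,
          (Nat.choose r m : ℝ) * x ^ m * (1 / (c - x) ^ (m + 1))) + 1 / (c - x) := by
        rw [hins, Finset.sum_insert (by simp)]
        simp only [pow_zero, Nat.choose_zero_right, Nat.cast_one, one_mul, zero_add, pow_one]
        ring
      rw [← hfull]
      have hterm : ∀ m ∈ Finset.range (r + 1),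
          (Nat.choose r m : ℝ) * x ^ m * (1 / (c - x) ^ (m + 1)) =
          (x ^ m * (c - x) ^ (r - m) * (Nat.choose r m : ℝ)) / (c - x) ^ (r + 1) := by
        intro m hm
        rw [Finset.mem_range] at hm
        have hexp : (c - x) ^ (r + 1) = (c - x) ^ (m + 1) * (c - x) ^ (r - m) := by
          rw [← pow_add]
          congr 1
          omega
        have hnum : x ^ m * (c - x) ^ (r - m) * (Nat.choose r m : ℝ) =
            ((Nat.choose r m : ℝ) * x ^ m) * (c - x) ^ (r - m) := by ring
        rw [hexp, hnum, mul_comm ((c - x) ^ (m + 1)) ((c - x) ^ (r - m)),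
          ← div_div, mul_div_assoc, div_self (pow_ne_zero _ hcx.ne'), mul_one,
          mul_one_div]
      rw [Finset.sum_congr rfl hterm, ← Finset.sum_div, ← add_pow]
      congr 2
      ring
    rw [show (∑ m ∈ Finset.Icc 1 r,
        (Nat.choose r m : ℝ) * x ^ m * (1 / (c - x) ^ (m + 1))) +
        (1 / (c - x) - 1 / c) =
        ((∑ m ∈ Finset.Icc 1 r,
        (Nat.choose r m : ℝ) * x ^ m * (1 / (c - x) ^ (m + 1))) +
        1 / (c - x)) - 1 / c by ring, key]
  have hg_rhs : HasSum g ((∑ m ∈ Finset.Icc 1 r,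
      (Nat.choose r m : ℝ) * hurwitzZetaReal ((m : ℝ) + 1) (1 - x) * x ^ m) +
      (-digammaReal (1 - x) - Real.eulerMascheroniConstant)) := by
    rw [← funext hpt]
    exact hcomb
  have hval : (∑' p, F p) = (∑ m ∈ Finset.Icc 1 r,
      (Nat.choose r m : ℝ) * hurwitzZetaReal ((m : ℝ) + 1) (1 - x) * x ^ m) -
      digammaReal (1 - x) - Real.eulerMascheroniConstant := by
    rw [hgsum.unique hg_rhs]
    ring
  constructor
  · apply Summable.of_nonneg_of_le (fun n => abs_nonneg _) (fun n => ?_) hbound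
    rw [abs_mul, abs_mul, abs_pow, Nat.abs_cast, abs_of_nonneg (hZnonneg n)]
    have hc : (0 : ℝ) ≤ (Nat.choose (n + 1 + r) (n + 1) : ℝ) := Nat.cast_nonneg _
    calc (Nat.choose (n + 1 + r) (n + 1) : ℝ) * realZeta ((n : ℝ) + 1 + 1) * |x| ^ (n + 1)
        ≤ (Nat.choose (n + 1 + r) (n + 1) : ℝ) * Z2 * |x| ^ (n + 1) := by
          apply mul_le_mul_of_nonneg_right _ (pow_nonneg (abs_nonneg x) _)
          exact mul_le_mul_of_nonneg_left (hZbound n) hc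
      _ = (Nat.choose (n + 1 + r) (n + 1) : ℝ) * |x| ^ (n + 1) * Z2 := by ring
  · rw [← hval]
    exact hAsum
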